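/- arXiv:2502.10818 — 2 statements merged into one kernel-verified Lean document; each statement's English description precedes it below -/
import Mathlib

section
/- Let A ∈ ℝ^{n×n} and B ∈ ℝ^{m×m} be symmetric real matrices whose eigenvalues, listed with multiplicity, are λ₁,…,λₙ and μ₁,…,μ_m respectively. Then the Kronecker product A ⊗ B is symmetric, and its multiset of eigenvalues listed with multiplicity equals the multiset {λᵢ·μⱼ : 1 ≤ i ≤ n, 1 ≤ j ≤ m}. -/
open Matrix Polynomial
open scoped Kronecker

private lemma charmatrix_diagonal' {n : Type*} [Fintype n] [DecidableEq n] (d : n → ℝ) :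
    charmatrix (Matrix.diagonal d) = Matrix.diagonal fun i => (X : ℝ[X]) - C (d i) := by
  ext i j
  by_cases h : i = j
  · subst h; simp
  · simp [h, Matrix.diagonal_apply_ne _ h]

private lemma charpoly_conj' {n : Type*} [Fintype n] [DecidableEq n]
    (U D V : Matrix n n ℝ) (hUV : U * V = 1) :
    (U * D * V).charpoly = D.charpoly := by
  have hsc : (C : ℝ →+* ℝ[X]).mapMatrix U * Matrix.scalar n (X : ℝ[X]) *
      (C : ℝ →+* ℝ[X]).mapMatrix V = Matrix.scalar n (X : ℝ[X]) := by
    rw [Matrix.scalar_apply, ← Matrix.smul_one_eq_diagonal, Matrix.mul_smul, Matrix.mul_one,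
      Matrix.smul_mul, ← _root_.map_mul, hUV, _root_.map_one, Matrix.smul_one_eq_diagonal,
      ← Matrix.scalar_apply]
  have key : charmatrix (U * D * V) =
      (C : ℝ →+* ℝ[X]).mapMatrix U * charmatrix D * (C : ℝ →+* ℝ[X]).mapMatrix V := by
    simp only [charmatrix, Matrix.mul_sub, Matrix.sub_mul, _root_.map_mul, hsc]
  have hdet : ((C : ℝ →+* ℝ[X]).mapMatrix U).det * ((C : ℝ →+* ℝ[X]).mapMatrix V).det = 1 := by
    rw [← Matrix.det_mul, ← _root_.map_mul, hUV, _root_.map_one, Matrix.det_one]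
  rw [Matrix.charpoly, Matrix.charpoly, key, Matrix.det_mul, Matrix.det_mul]
  ring_nf
  rw [mul_comm, ← mul_assoc, mul_comm (((C : ℝ →+* ℝ[X]).mapMatrix V).det), hdet, one_mul]

private lemma charpoly_roots_conj_diag {n : Type*} [Fintype n] [DecidableEq n]
    (U V : Matrix n n ℝ) (d : n → ℝ) (hUV : U * V = 1) :
    (U * Matrix.diagonal d * V).charpoly.roots = Finset.univ.val.map d := by
  rw [charpoly_conj' _ _ _ hUV, Matrix.charpoly, charmatrix_diagonal', Matrix.det_diagonal]
  have : (∏ i, ((X : ℝ[X]) - C (d i))) =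
      ((Finset.univ.val.map d).map fun a => (X : ℝ[X]) - C a).prod := by
    rw [Multiset.map_map]
    rfl
  rw [this, Polynomial.roots_multiset_prod_X_sub_C]

private lemma herm_roots {n : Type*} [Fintype n] [DecidableEq n]
    {M : Matrix n n ℝ} (hM : M.IsHermitian) :
    M.charpoly.roots = Finset.univ.val.map hM.eigenvalues := by
  have hs := hM.spectral_theorem
  have hofReal : Matrix.diagonal (RCLike.ofReal ∘ hM.eigenvalues) =
      Matrix.diagonal hM.eigenvalues := by
    congr 1
  have hU : (hM.eigenvectorUnitary : Matrix n n ℝ) *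
      star (hM.eigenvectorUnitary : Matrix n n ℝ) = 1 :=
    (Matrix.mem_unitaryGroup_iff).mp hM.eigenvectorUnitary.2
  conv_lhs => rw [hs, hofReal]
  exact charpoly_roots_conj_diag _ _ _ hU

/-- If `A` and `B` are real symmetric (Hermitian) matrices, then `A ⊗ B` is
symmetric and its multiset of eigenvalues (with multiplicity) is the multiset
of all products `λᵢ * μⱼ` of eigenvalues of `A` and `B`. -/
theorem kronecker_isHermitian_and_eigenvalues
    {n m : Type*} [Fintype n] [DecidableEq n] [Fintype m] [DecidableEq m]
    (A : Matrix n n ℝ) (B : Matrix m m ℝ)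
    (hA : A.IsHermitian) (hB : B.IsHermitian) :
    ∃ hAB : (A ⊗ₖ B).IsHermitian,
      (Finset.univ.val.map hAB.eigenvalues) =
        (Finset.univ.val.map
          (fun p : n × m => hA.eigenvalues p.1 * hB.eigenvalues p.2)) := by
  have hct : (A ⊗ₖ B)ᴴ = Aᴴ ⊗ₖ Bᴴ := by
    ext ⟨i, k⟩ ⟨j, l⟩
    simp [Matrix.conjTranspose_apply, Matrix.kroneckerMap_apply, mul_comm]
  have hAB : (A ⊗ₖ B).IsHermitian := by
    unfold Matrix.IsHermitian
    rw [hct, hA.eq, hB.eq]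
  refine ⟨hAB, ?_⟩
  rw [← herm_roots hAB]
  -- Diagonalize A and B
  have hUA : (hA.eigenvectorUnitary : Matrix n n ℝ) *
      star (hA.eigenvectorUnitary : Matrix n n ℝ) = 1 :=
    (Matrix.mem_unitaryGroup_iff).mp hA.eigenvectorUnitary.2
  have hUB : (hB.eigenvectorUnitary : Matrix m m ℝ) *
      star (hB.eigenvectorUnitary : Matrix m m ℝ) = 1 :=
    (Matrix.mem_unitaryGroup_iff).mp hB.eigenvectorUnitary.2
  have hofA : Matrix.diagonal (RCLike.ofReal ∘ hA.eigenvalues) =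
      Matrix.diagonal hA.eigenvalues := by congr 1
  have hofB : Matrix.diagonal (RCLike.ofReal ∘ hB.eigenvalues) =
      Matrix.diagonal hB.eigenvalues := by congr 1
  set UA := (hA.eigenvectorUnitary : Matrix n n ℝ)
  set UB := (hB.eigenvectorUnitary : Matrix m m ℝ)
  have hdec : A ⊗ₖ B = (UA ⊗ₖ UB) *
      Matrix.diagonal (fun p : n × m => hA.eigenvalues p.1 * hB.eigenvalues p.2) *
      (star UA ⊗ₖ star UB) := by
    conv_lhs => rw [hA.spectral_theorem, hB.spectral_theorem, hofA, hofB]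
    rw [Unitary.conjStarAlgAut_apply, Unitary.conjStarAlgAut_apply]
    rw [Matrix.mul_kronecker_mul, Matrix.mul_kronecker_mul,
      Matrix.diagonal_kronecker_diagonal]

  have hUV : (UA ⊗ₖ UB) * (star UA ⊗ₖ star UB) = 1 := by
    rw [← Matrix.mul_kronecker_mul, hUA, hUB, Matrix.one_kronecker_one]
  rw [hdec]
  exact charpoly_roots_conj_diag _ _ _ hUV
end

section
/- Let G be a finite simple graph with vertex set V and edge set E(G), and let node feature configurations live in H = (V → ℝ^d) with the ℓ² norm ‖H‖ = (Σ_{v∈V} ‖H(v)‖²)^{1/2}. Let ε ∈ (0,1) and let (fₖ)_{k≥1} be a sequence of maps H → H, each Lipschitz with constant 1−ε and each fixing the origin. Then for every H ∈ H, the Dirichlet energy of the iterated compositions tends to zero: E((f_K ∘ ⋯ ∘ f₁)(H)) → 0 as K → ∞, where E(X) = Σ_{{u,v} ∈ E(G)} ‖X(u) − X(v)‖². -/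
/-- Iterated composition: `compSeq f K = f_{K-1} ∘ ⋯ ∘ f_0` (with
`compSeq f 0 = id`), i.e. the composition of the first `K` maps. -/
def compSeq {E : Type*} (f : ℕ → E → E) : ℕ → E → E
  | 0 => id
  | k + 1 => f k ∘ compSeq f k

/-- Dirichlet energy of a feature configuration `X : V → ℝ^d` over a graph:
the sum over unordered edges `{u,v}` of `‖X u - X v‖²`. -/
noncomputable def dirichletEnergy {V : Type*} [Fintype V] [DecidableEq V] {d : ℕ}
    (G : SimpleGraph V) [DecidableRel G.Adj]
    (X : V → EuclideanSpace ℝ (Fin d)) : ℝ :=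
  ∑ e ∈ G.edgeFinset,
    Sym2.lift ⟨fun u v => ‖X u - X v‖ ^ 2, fun u v => by simp [norm_sub_rev]⟩ e

/-- If `(fₖ)` is a sequence of maps on the feature space `V → ℝ^d` (with the
ℓ² norm `‖X‖ = (Σ_v ‖X v‖²)^{1/2}`), each Lipschitz with constant `1 - ε`
(for `ε ∈ (0,1)`) and fixing the origin, then the Dirichlet energy of the
iterated compositions tends to zero: `E((f_K ∘ ⋯ ∘ f_1) H) → 0` as `K → ∞`. -/
theorem dirichletEnergy_compSeq_tendsto_zero
    {V : Type*} [Fintype V] [DecidableEq V] {d : ℕ}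
    (G : SimpleGraph V) [DecidableRel G.Adj]
    (ε : ℝ) (hε : ε ∈ Set.Ioo (0 : ℝ) 1)
    (f : ℕ → (V → EuclideanSpace ℝ (Fin d)) → (V → EuclideanSpace ℝ (Fin d)))
    (hlip : ∀ k, ∀ x y : V → EuclideanSpace ℝ (Fin d),
      Real.sqrt (∑ v : V, ‖f k x v - f k y v‖ ^ 2) ≤
        (1 - ε) * Real.sqrt (∑ v : V, ‖x v - y v‖ ^ 2))
    (hfix : ∀ k, f k 0 = 0)
    (H : V → EuclideanSpace ℝ (Fin d)) :
    Filter.Tendsto (fun K => dirichletEnergy G (compSeq f K H))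
      Filter.atTop (nhds 0) := by
  obtain ⟨hε0, hε1⟩ := hε
  set S : (V → EuclideanSpace ℝ (Fin d)) → ℝ := fun X => ∑ v : V, ‖X v‖ ^ 2 with hS
  have hSnn : ∀ X, 0 ≤ S X := fun X =>
    Finset.sum_nonneg fun v _ => by positivity
  set a : ℕ → ℝ := fun K => Real.sqrt (S (compSeq f K H)) with ha
  have hann : ∀ K, 0 ≤ a K := fun K => Real.sqrt_nonneg _
  have hstep : ∀ K, a (K + 1) ≤ (1 - ε) * a K := by
    intro K
    have := hlip K (compSeq f K H) 0
    simpa [a, S, compSeq, hfix K] using this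
  have hgeom : ∀ K, a K ≤ (1 - ε) ^ K * a 0 := by
    intro K
    induction K with
    | zero => simp
    | succ n ih =>
        calc a (n + 1) ≤ (1 - ε) * a n := hstep n
        _ ≤ (1 - ε) * ((1 - ε) ^ n * a 0) := by
            apply mul_le_mul_of_nonneg_left ih (by linarith)
        _ = (1 - ε) ^ (n + 1) * a 0 := by ring
  have ha0 : Filter.Tendsto a Filter.atTop (nhds 0) := by
    have hpow : Filter.Tendsto (fun K => (1 - ε) ^ K * a 0) Filter.atTop (nhds 0) := by
      have := (tendsto_pow_atTop_nhds_zero_of_lt_one (by linarith : (0:ℝ) ≤ 1 - ε)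
        (by linarith)).mul_const (a 0)
      simpa using this
    exact squeeze_zero hann hgeom hpow
  have hS0 : Filter.Tendsto (fun K => S (compSeq f K H)) Filter.atTop (nhds 0) := by
    have : (fun K => S (compSeq f K H)) = fun K => a K * a K := by
      funext K
      rw [ha]
      simp [Real.mul_self_sqrt (hSnn _)]
    rw [this]
    simpa using ha0.mul ha0
  -- Dirichlet energy is squeezed between 0 and 2|E| * S
  have hub : ∀ K, dirichletEnergy G (compSeq f K H) ≤
      (4 * (G.edgeFinset.card : ℝ)) * S (compSeq f K H) := by
    intro K
    set X := compSeq f K H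
    have hedge : ∀ e ∈ G.edgeFinset,
        Sym2.lift ⟨fun u v => ‖X u - X v‖ ^ 2, fun u v => by simp [norm_sub_rev]⟩ e
          ≤ 4 * S X := by
      intro e he
      induction e using Sym2.ind with
      | _ u v =>
        have h1 : ‖X u - X v‖ ^ 2 ≤ 2 * (‖X u‖ ^ 2 + ‖X v‖ ^ 2) := by
          have h := norm_sub_le (X u) (X v)
          nlinarith [sq_nonneg (‖X u‖ - ‖X v‖), norm_nonneg (X u - X v),
            norm_nonneg (X u), norm_nonneg (X v)]
        have hv : ‖X v‖ ^ 2 ≤ S X :=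
          Finset.single_le_sum (f := fun w => ‖X w‖ ^ 2) (fun w _ => by positivity) (Finset.mem_univ v)
        have hu : ‖X u‖ ^ 2 ≤ S X :=
          Finset.single_le_sum (f := fun w => ‖X w‖ ^ 2) (fun w _ => by positivity) (Finset.mem_univ u)
        simp only [Sym2.lift_mk]; linarith
    calc dirichletEnergy G X ≤ ∑ _e ∈ G.edgeFinset, 4 * S X :=
          Finset.sum_le_sum hedge
      _ = (G.edgeFinset.card : ℝ) * (4 * S X) := by
          rw [Finset.sum_const, nsmul_eq_mul]
      _ = (4 * (G.edgeFinset.card : ℝ)) * S X := by ring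
  have hlb : ∀ K, 0 ≤ dirichletEnergy G (compSeq f K H) := by
    intro K
    apply Finset.sum_nonneg
    intro e he
    induction e using Sym2.ind with
    | _ u v => simp only [Sym2.lift_mk]; exact sq_nonneg ‖compSeq f K H u - compSeq f K H v‖
  have hmul : Filter.Tendsto (fun K => (4 * (G.edgeFinset.card : ℝ)) * S (compSeq f K H))
      Filter.atTop (nhds 0) := by
    simpa using hS0.const_mul (4 * (G.edgeFinset.card : ℝ))
  exact squeeze_zero hlb hub hmul
end
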